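/- The infimum of Q over Φ equals 1: the number 1 is the greatest lower bound of the set {Q(φ₁,φ₂,φ₃) : (φ₁,φ₂,φ₃) ∈ Φ} (IsGLB of the image of Φ under Q). -/

import Mathlib

open Real Filter Topology

/-- The limit of the quotient of the discrete and smooth Willmore energies for a
triangulation with lattice angles `(φ₁, φ₂, φ₃)`. -/
noncomputable def willmoreRatioQ (φ₁ φ₂ φ₃ : ℝ) : ℝ :=
  1 - ((cos (2 * φ₁) * cos φ₃ + cos (2 * φ₁ + 2 * φ₂ + φ₃)) ^ 2 +
        (sin (2 * φ₁) * cos φ₃) ^ 2) /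
      (4 * cos φ₂ * cos φ₃ * cos (φ₂ + φ₃))

/-- The moduli space of regular lattices of acute triangles. -/
def willmorePhi : Set (ℝ × ℝ × ℝ) :=
  {φ | 0 ≤ φ.1 ∧ φ.1 < π / 2 ∧ 0 < φ.2.1 ∧ φ.2.1 < π / 2 ∧ 0 < φ.2.2 ∧ φ.2.2 < π / 2 ∧
    π / 2 < φ.2.1 + φ.2.2}

lemma willmore_key (t : ℝ) (h1 : π/4 < t) (h2 : t < π/2) :
    willmoreRatioQ 0 (π/4) t = 1 - (Real.sqrt 2 / 2) * Real.cos (π/4 + t) / Real.cos t := by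
  have hpi := Real.pi_pos
  have hc : 0 < Real.cos t := Real.cos_pos_of_mem_Ioo ⟨by linarith, h2⟩
  have hcos4 : Real.cos (π/4) = Real.sqrt 2 / 2 := Real.cos_pi_div_four
  have hsin4 : Real.sin (π/4) = Real.sqrt 2 / 2 := Real.sin_pi_div_four
  have hneg : Real.cos (π/4 + t) < 0 := by
    apply Real.cos_neg_of_pi_div_two_lt_of_lt <;> linarith
  have hadd : Real.cos (π/4 + t) = Real.sqrt 2 / 2 * (Real.cos t - Real.sin t) := by
    rw [Real.cos_add, hcos4, hsin4]; ring
  have hs2 : Real.sqrt 2 * Real.sqrt 2 = 2 := Real.mul_self_sqrt (by norm_num)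
  have hs2pos : 0 < Real.sqrt 2 := Real.sqrt_pos.mpr (by norm_num)
  have hcs : Real.cos t - Real.sin t < 0 := by nlinarith [hadd, hneg]
  unfold willmoreRatioQ
  rw [show (2:ℝ) * 0 + 2 * (π/4) + t = t + π/2 by ring,
      show (2:ℝ) * 0 = 0 by ring, Real.cos_zero, Real.sin_zero,
      Real.cos_add_pi_div_two, hcos4, hadd]
  rw [sub_right_inj]
  have hc' : Real.cos t ≠ 0 := ne_of_gt hc
  have hcs' : Real.cos t - Real.sin t ≠ 0 := ne_of_lt hcs
  have h2' : Real.sqrt 2 ≠ 0 := ne_of_gt hs2pos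
  field_simp
  ring_nf
  linear_combination ((8 * Real.cos t * Real.sin t - 4 * Real.cos t ^ 2 - 4 * Real.sin t ^ 2) * (Real.sqrt 2 * Real.sqrt 2 + 2)) * hs2

/-- The infimum of the energy ratio `Q` over `Φ` equals `1`. -/
theorem willmoreRatioQ_isGLB :
    IsGLB ((fun φ : ℝ × ℝ × ℝ => willmoreRatioQ φ.1 φ.2.1 φ.2.2) '' willmorePhi) 1 := by
  have hpi := Real.pi_pos
  constructor
  · rintro x ⟨⟨a, b, c⟩, ⟨ha0, ha, hb0, hb, hc0, hc, hbc⟩, rfl⟩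
    simp only [willmoreRatioQ]
    have hcb : 0 < Real.cos b := Real.cos_pos_of_mem_Ioo ⟨by linarith, hb⟩
    have hcc : 0 < Real.cos c := Real.cos_pos_of_mem_Ioo ⟨by linarith, hc⟩
    have hbc' : Real.cos (b + c) < 0 :=
      Real.cos_neg_of_pi_div_two_lt_of_lt hbc (by linarith)
    have hN : 0 ≤ (Real.cos (2*a) * Real.cos c + Real.cos (2*a + 2*b + c))^2 +
        (Real.sin (2*a) * Real.cos c)^2 := by positivity
    have hD : 4 * Real.cos b * Real.cos c * Real.cos (b + c) < 0 :=
      mul_neg_of_pos_of_neg (by positivity) hbc'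
    have hq : ((Real.cos (2*a) * Real.cos c + Real.cos (2*a + 2*b + c))^2 +
        (Real.sin (2*a) * Real.cos c)^2) / (4 * Real.cos b * Real.cos c * Real.cos (b + c)) ≤ 0 :=
      div_nonpos_of_nonneg_of_nonpos hN hD.le
    linarith
  · intro w hw
    have hne : Real.cos (π/4) ≠ 0 := by
      rw [Real.cos_pi_div_four]; positivity
    have hcont : ContinuousAt
        (fun t : ℝ => 1 - Real.sqrt 2 / 2 * Real.cos (π/4 + t) / Real.cos t) (π/4) := by
      apply ContinuousAt.sub continuousAt_const
      exact ContinuousAt.div (by fun_prop) (by fun_prop) hne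
    have hval : (1 : ℝ) - Real.sqrt 2 / 2 * Real.cos (π/4 + π/4) / Real.cos (π/4) = 1 := by
      rw [show π/4 + π/4 = π/2 by ring, Real.cos_pi_div_two]
      simp
    have htend : Tendsto (fun t : ℝ => 1 - Real.sqrt 2 / 2 * Real.cos (π/4 + t) / Real.cos t)
        (𝓝[>] (π/4)) (𝓝 1) := by
      have := hcont.tendsto.mono_left (nhdsWithin_le_nhds (s := Set.Ioi (π/4)))
      rwa [hval] at this
    refine ge_of_tendsto htend ?_
    filter_upwards [Ioo_mem_nhdsGT_of_mem (show (π/4) ∈ Set.Ico (π/4) (π/2) from ⟨le_refl _, by linarith⟩)] with t ht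
    rw [← willmore_key t ht.1 ht.2]
    exact hw ⟨(0, π/4, t), ⟨le_refl 0, by linarith, by linarith, by linarith, ht.1.trans' (by linarith), ht.2, by linarith [ht.1]⟩, rfl⟩
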